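/- For every ξ ∈ ℝ² the set of eigenvalues of the Hermitian matrix L̂(ξ) is exactly {0, |ξ|² + k²}, where the eigenvalue 0 has multiplicity 2 and the eigenvalue |ξ|² + k² has multiplicity 4 (counted algebraically). -/

import Mathlib

open Complex Matrix Polynomial

/-- The symbol of the operator L = ∘∇× ∘∇× on ℝ² with parameter k. -/
noncomputable def Lhat (k ξ₁ ξ₂ : ℝ) : Matrix (Fin 6) (Fin 6) ℂ :=
  !![((ξ₂^2 + k^2 : ℝ) : ℂ), ((-(ξ₁*ξ₂) : ℝ) : ℂ), 0, 0, 0, I * k * ξ₁;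
     ((-(ξ₁*ξ₂) : ℝ) : ℂ), ((ξ₁^2 + k^2 : ℝ) : ℂ), 0, 0, 0, I * k * ξ₂;
     0, 0, ((ξ₁^2 + ξ₂^2 : ℝ) : ℂ), I * k * ξ₁, I * k * ξ₂, 0;
     0, 0, -(I * k * ξ₁), ((ξ₂^2 + k^2 : ℝ) : ℂ), ((-(ξ₁*ξ₂) : ℝ) : ℂ), 0;
     0, 0, -(I * k * ξ₂), ((-(ξ₁*ξ₂) : ℝ) : ℂ), ((ξ₁^2 + k^2 : ℝ) : ℂ), 0;
     -(I * k * ξ₁), -(I * k * ξ₂), 0, 0, 0, ((ξ₁^2 + ξ₂^2 : ℝ) : ℂ)]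

section aux
variable {α : Type*}
lemma cv5' (x : α) (u : Fin 5 → α) : vecCons x u 5 = u 4 := rfl
lemma cv4' (x : α) (u : Fin 4 → α) : vecCons x u 4 = u 3 := rfl
lemma cv3' (x : α) (u : Fin 3 → α) : vecCons x u 3 = u 2 := rfl
lemma cv2' (x : α) (u : Fin 2 → α) : vecCons x u 2 = u 1 := rfl
lemma cv1' (x : α) (u : Fin 1 → α) : vecCons x u 1 = u 0 := rfl
end aux

/-- The permutation grouping indices {0,1,5} and {2,3,4}. -/
def eblk : (Fin 3 ⊕ Fin 3) ≃ Fin 6 where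
  toFun := Sum.elim ![0,1,5] ![2,3,4]
  invFun := ![Sum.inl 0, Sum.inl 1, Sum.inr 0, Sum.inr 1, Sum.inr 2, Sum.inl 2]
  left_inv := by decide
  right_inv := by decide

noncomputable def Ablk (k ξ₁ ξ₂ : ℝ) : Matrix (Fin 3) (Fin 3) ℂ :=
  !![((ξ₂^2 + k^2 : ℝ) : ℂ), ((-(ξ₁*ξ₂) : ℝ) : ℂ), I * k * ξ₁;
     ((-(ξ₁*ξ₂) : ℝ) : ℂ), ((ξ₁^2 + k^2 : ℝ) : ℂ), I * k * ξ₂;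
     -(I * k * ξ₁), -(I * k * ξ₂), ((ξ₁^2 + ξ₂^2 : ℝ) : ℂ)]

noncomputable def Bblk (k ξ₁ ξ₂ : ℝ) : Matrix (Fin 3) (Fin 3) ℂ :=
  !![((ξ₁^2 + ξ₂^2 : ℝ) : ℂ), I * k * ξ₁, I * k * ξ₂;
     -(I * k * ξ₁), ((ξ₂^2 + k^2 : ℝ) : ℂ), ((-(ξ₁*ξ₂) : ℝ) : ℂ);
     -(I * k * ξ₂), ((-(ξ₁*ξ₂) : ℝ) : ℂ), ((ξ₁^2 + k^2 : ℝ) : ℂ)]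

lemma Lhat_eq_blocks (k ξ₁ ξ₂ : ℝ) :
    Lhat k ξ₁ ξ₂ = (reindex eblk eblk) (fromBlocks (Ablk k ξ₁ ξ₂) 0 0 (Bblk k ξ₁ ξ₂)) := by
  ext i j
  fin_cases i <;> fin_cases j <;>
    simp [Lhat, Ablk, Bblk, eblk, Matrix.fromBlocks, cv5', cv4', cv3', cv2', cv1']

lemma charpoly_Ablk (k ξ₁ ξ₂ : ℝ) :
    (Ablk k ξ₁ ξ₂).charpoly = X * (X - C ((ξ₁^2 + ξ₂^2 + k^2 : ℝ) : ℂ))^2 := by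
  set a : ℂ[X] := C (ξ₁ : ℂ) with ha
  set b : ℂ[X] := C (ξ₂ : ℂ) with hb
  set c : ℂ[X] := C (k : ℂ) with hc
  set i : ℂ[X] := C (I : ℂ) with hi
  have hI2 : i^2 = -1 := by rw [hi, ← _root_.map_pow, Complex.I_sq, _root_.map_neg, _root_.map_one]
  have hs : C ((ξ₁^2 + ξ₂^2 + k^2 : ℝ) : ℂ) = a^2 + b^2 + c^2 := by
    rw [ha, hb, hc]; push_cast; simp [_root_.map_add, _root_.map_pow]
  have hch : charmatrix (Ablk k ξ₁ ξ₂) =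
    !![X - (b^2 + c^2), a*b, -(i*c*a);
       a*b, X - (a^2 + c^2), -(i*c*b);
       i*c*a, i*c*b, X - (a^2 + b^2)] := by
    ext p q
    fin_cases p <;> fin_cases q <;>
      simp [charmatrix_apply, Ablk, Matrix.one_apply, cv2', cv1',
        ha, hb, hc, hi, _root_.map_add, _root_.map_pow, _root_.map_mul, _root_.map_neg,
        Complex.ofReal_add, Complex.ofReal_pow, Complex.ofReal_mul, Complex.ofReal_neg]
  rw [Matrix.charpoly, hch, Matrix.det_fin_three, hs]
  simp only [cv2', cv1', Matrix.cons_val_zero, Matrix.cons_val_one, Matrix.head_cons,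
    Matrix.cons_val', Matrix.head_fin_const, Matrix.of_apply, Matrix.empty_val',
    Matrix.cons_val_fin_one]
  linear_combination (c^2*b^2*(X-(b^2+c^2)) + c^2*a^2*(X-(a^2+c^2)) - 2*a^2*b^2*c^2) * hI2

lemma charpoly_Bblk (k ξ₁ ξ₂ : ℝ) :
    (Bblk k ξ₁ ξ₂).charpoly = X * (X - C ((ξ₁^2 + ξ₂^2 + k^2 : ℝ) : ℂ))^2 := by
  set a : ℂ[X] := C (ξ₁ : ℂ) with ha
  set b : ℂ[X] := C (ξ₂ : ℂ) with hb
  set c : ℂ[X] := C (k : ℂ) with hc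
  set i : ℂ[X] := C (I : ℂ) with hi
  have hI2 : i^2 = -1 := by rw [hi, ← _root_.map_pow, Complex.I_sq, _root_.map_neg, _root_.map_one]
  have hs : C ((ξ₁^2 + ξ₂^2 + k^2 : ℝ) : ℂ) = a^2 + b^2 + c^2 := by
    rw [ha, hb, hc]; push_cast; simp [_root_.map_add, _root_.map_pow]
  have hch : charmatrix (Bblk k ξ₁ ξ₂) =
    !![X - (a^2 + b^2), -(i*c*a), -(i*c*b);
       i*c*a, X - (b^2 + c^2), a*b;
       i*c*b, a*b, X - (a^2 + c^2)] := by
    ext p q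
    fin_cases p <;> fin_cases q <;>
      simp [charmatrix_apply, Bblk, Matrix.one_apply, cv2', cv1',
        ha, hb, hc, hi, _root_.map_add, _root_.map_pow, _root_.map_mul, _root_.map_neg,
        Complex.ofReal_add, Complex.ofReal_pow, Complex.ofReal_mul, Complex.ofReal_neg]
  rw [Matrix.charpoly, hch, Matrix.det_fin_three, hs]
  simp only [cv2', cv1', Matrix.cons_val_zero, Matrix.cons_val_one, Matrix.head_cons,
    Matrix.cons_val', Matrix.head_fin_const, Matrix.of_apply, Matrix.empty_val',
    Matrix.cons_val_fin_one]
  linear_combination (c^2*b^2*(X-(b^2+c^2)) + c^2*a^2*(X-(a^2+c^2)) - 2*a^2*b^2*c^2) * hI2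

lemma charpoly_Lhat (k ξ₁ ξ₂ : ℝ) :
    (Lhat k ξ₁ ξ₂).charpoly = X^2 * (X - C ((ξ₁^2 + ξ₂^2 + k^2 : ℝ) : ℂ))^4 := by
  rw [Lhat_eq_blocks, Matrix.charpoly_reindex, Matrix.charpoly_fromBlocks_zero₁₂,
    charpoly_Ablk, charpoly_Bblk]
  ring

lemma eval_charpoly' {n : ℕ} (M : Matrix (Fin n) (Fin n) ℂ) (μ : ℂ) :
    M.charpoly.eval μ = (Matrix.diagonal (fun _ => μ) - M).det := by
  rw [Matrix.charpoly, ← Polynomial.coe_evalRingHom, RingHom.map_det]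
  congr 1
  ext i j
  by_cases h : i = j
  · subst h; simp [charmatrix_apply_eq]
  · simp [charmatrix_apply_ne _ _ _ h, Matrix.diagonal_apply_ne _ h]

lemma spectrum_eq_roots {n : ℕ} (M : Matrix (Fin n) (Fin n) ℂ) :
    spectrum ℂ M = {μ | M.charpoly.eval μ = 0} := by
  ext μ
  rw [spectrum.mem_iff, Set.mem_setOf_eq, eval_charpoly']
  rw [Matrix.algebraMap_eq_diagonal]
  rw [show (algebraMap ℂ (Fin n → ℂ) μ) = fun _ => μ from by ext; simp]
  constructor
  · intro h
    by_contra hd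
    exact h ((Matrix.isUnit_iff_isUnit_det _).2 (isUnit_iff_ne_zero.2 (by simpa using hd)))
  · intro h hu
    have := ((Matrix.isUnit_iff_isUnit_det _).1 hu).ne_zero
    apply this
    convert h using 2

lemma isHermitian_Lhat (k ξ₁ ξ₂ : ℝ) : (Lhat k ξ₁ ξ₂).IsHermitian := by
  rw [Matrix.IsHermitian]
  ext i j
  fin_cases i <;> fin_cases j <;>
    simp [Lhat, Matrix.conjTranspose_apply, Complex.ext_iff, cv5', cv4', cv3', cv2', cv1']

/-- For every ξ ∈ ℝ², the Hermitian matrix L̂(ξ) has eigenvalues exactly {0, |ξ|²+k²},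
with 0 of algebraic multiplicity 2 and |ξ|²+k² of algebraic multiplicity 4, i.e. its
characteristic polynomial is X²·(X − (|ξ|²+k²))⁴, and its spectrum is {0, |ξ|²+k²}. -/
theorem stmt_2 (k : ℝ) (hk : k ≠ 0) (ξ₁ ξ₂ : ℝ) :
    (Lhat k ξ₁ ξ₂).IsHermitian ∧
    (Lhat k ξ₁ ξ₂).charpoly =
      X^2 * (X - C ((ξ₁^2 + ξ₂^2 + k^2 : ℝ) : ℂ))^4 ∧
    spectrum ℂ (Lhat k ξ₁ ξ₂) = {0, ((ξ₁^2 + ξ₂^2 + k^2 : ℝ) : ℂ)} := by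
  refine ⟨isHermitian_Lhat k ξ₁ ξ₂, charpoly_Lhat k ξ₁ ξ₂, ?_⟩
  rw [spectrum_eq_roots, charpoly_Lhat]
  ext μ
  simp only [Set.mem_setOf_eq, Set.mem_insert_iff, Set.mem_singleton_iff, eval_mul, eval_pow,
    eval_sub, eval_X, eval_C, mul_eq_zero, pow_eq_zero_iff, sub_eq_zero]
  simp [pow_eq_zero_iff, sub_eq_zero]
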